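/- Let G be a chordal graph with clique tree T = (K_G, E_T), p the CSMA product-form distribution with back-off rates ν_i, and p_i(1) the marginal probability that x_i = 1. Assuming the junction-tree factorization of p over T, for every vertex i: ν_i = p_i(1) · [∏_{(K,K')∈E_T: i∈K∩K'} (1 − ∑_{s∈K∩K'} p_s(1))] / [∏_{K∈K_G: i∈K} (1 − ∑_{s∈K} p_s(1))]. -/

import Mathlib

open Finset

variable {V : Type*} [Fintype V] [DecidableEq V]

/-- The separator `K ∩ K'` associated with an unordered pair of cliques. -/
def sep {KG : Finset (Finset V)} (e : Sym2 {K // K ∈ KG}) : Finset V :=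
  Sym2.lift ⟨fun a b => a.val ∩ b.val, fun a b => Finset.inter_comm _ _⟩ e

/-- Unnormalized CSMA weight of a state. -/
noncomputable def csmaWeight (G : SimpleGraph V) [DecidableRel G.Adj] (ν : V → ℝ)
    (x : V → Bool) : ℝ :=
  (∏ i, if x i then ν i else 1) *
    ∏ e ∈ G.edgeFinset, (if ∀ v ∈ e, x v = true then (0 : ℝ) else 1)

/-- Normalizing constant `Z`. -/
noncomputable def csmaZ (G : SimpleGraph V) [DecidableRel G.Adj] (ν : V → ℝ) : ℝ :=
  ∑ x : V → Bool, csmaWeight G ν x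

/-- The CSMA product-form distribution. -/
noncomputable def csmaP (G : SimpleGraph V) [DecidableRel G.Adj] (ν : V → ℝ)
    (x : V → Bool) : ℝ :=
  csmaWeight G ν x / csmaZ G ν

/-- Marginal of `p` on the coordinates in `S`, evaluated at `y`. -/
noncomputable def csmaMarg (G : SimpleGraph V) [DecidableRel G.Adj] (ν : V → ℝ)
    (S : Finset V) (y : V → Bool) : ℝ :=
  ∑ x ∈ Finset.univ.filter (fun x : V → Bool => ∀ i ∈ S, x i = y i), csmaP G ν x

/-- Throughput of link `i`: the marginal probability that `x i = 1`. -/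
noncomputable def csmaOne (G : SimpleGraph V) [DecidableRel G.Adj] (ν : V → ℝ)
    (i : V) : ℝ :=
  csmaMarg G ν {i} (fun _ => true)

/-- `x` is the indicator vector of an independent set of `G`. -/
def IsIndep (G : SimpleGraph V) (x : V → Bool) : Prop :=
  ∀ i j, G.Adj i j → ¬(x i = true ∧ x j = true)


section Aux

variable (G : SimpleGraph V) [DecidableRel G.Adj] (ν : V → ℝ)

lemma weight_nonneg (hν : ∀ i, 0 < ν i) (x : V → Bool) : 0 ≤ csmaWeight G ν x := by
  unfold csmaWeight
  apply mul_nonneg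
  · exact Finset.prod_nonneg fun i _ => by split <;> [exact (hν i).le; norm_num]
  · exact Finset.prod_nonneg fun e _ => by split <;> norm_num

lemma weight_false : csmaWeight G ν (fun _ => false) = 1 := by
  unfold csmaWeight
  have h1 : (∏ i : V, if (fun _ => false) i then ν i else (1:ℝ)) = 1 :=
    Finset.prod_eq_one fun i _ => by simp
  have h2 : (∏ e ∈ G.edgeFinset, if ∀ v ∈ e, (fun _ => false) v = true then (0:ℝ) else 1) = 1 := by
    refine Finset.prod_eq_one fun e he => ?_
    induction e using Sym2.ind with
    | _ a b =>
      rw [if_neg]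
      intro h
      simpa using h a (by simp)
  rw [h1, h2, mul_one]

lemma Z_pos (hν : ∀ i, 0 < ν i) : 0 < csmaZ G ν := by
  have h1 : csmaWeight G ν (fun _ => false) = 1 := weight_false G ν
  have := Finset.single_le_sum (f := csmaWeight G ν)
    (fun x _ => weight_nonneg G ν hν x) (Finset.mem_univ (fun _ => false))
  unfold csmaZ; linarith

lemma P_nonneg (hν : ∀ i, 0 < ν i) (x : V → Bool) : 0 ≤ csmaP G ν x :=
  div_nonneg (weight_nonneg G ν hν x) (Z_pos G ν hν).le

lemma P_of_not_indep (x : V → Bool) (hx : ¬ IsIndep G x) : csmaP G ν x = 0 := by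
  unfold IsIndep at hx
  push_neg at hx
  obtain ⟨a, b, hab, ha, hb⟩ := hx
  have hmem : s(a, b) ∈ G.edgeFinset := by
    rw [SimpleGraph.mem_edgeFinset, SimpleGraph.mem_edgeSet]; exact hab
  have : csmaWeight G ν x = 0 := by
    unfold csmaWeight
    rw [Finset.prod_eq_zero hmem, mul_zero]
    rw [if_pos]
    intro v hv
    rw [Sym2.mem_iff] at hv
    rcases hv with rfl | rfl <;> assumption
  unfold csmaP; rw [this, zero_div]

lemma weight_of_indep (x : V → Bool) (hx : IsIndep G x) :
    csmaWeight G ν x = ∏ i, if x i then ν i else 1 := by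
  unfold csmaWeight
  have h2 : (∏ e ∈ G.edgeFinset, if ∀ v ∈ e, x v = true then (0:ℝ) else 1) = 1 := by
    refine Finset.prod_eq_one fun e he => ?_
    revert he
    induction e using Sym2.ind with
    | _ a b =>
      intro he
      rw [if_neg]
      intro h
      rw [SimpleGraph.mem_edgeFinset, SimpleGraph.mem_edgeSet] at he
      exact hx a b he ⟨h a (by simp), h b (by simp)⟩
  rw [h2, mul_one]

lemma P_sum_one (hν : ∀ i, 0 < ν i) : ∑ x : V → Bool, csmaP G ν x = 1 := by
  unfold csmaP
  rw [← Finset.sum_div, div_eq_one_iff_eq (Z_pos G ν hν).ne']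
  rfl


lemma indep_of_P_ne (x : V → Bool) (hx : csmaP G ν x ≠ 0) : IsIndep G x := by
  by_contra h
  exact hx (P_of_not_indep G ν x h)

lemma marg_clique_one (S : Finset V) (hS : G.IsClique (S : Set V)) (i : V) (hi : i ∈ S) :
    csmaMarg G ν S (fun j => decide (j = i)) = csmaOne G ν i := by
  unfold csmaOne csmaMarg
  apply Finset.sum_subset
  · intro x hx
    simp only [Finset.mem_filter, Finset.mem_univ, true_and] at hx ⊢
    intro j hj
    rw [Finset.mem_singleton] at hj
    subst hj
    simpa using hx _ hi
  · intro x hx hnx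
    simp only [Finset.mem_filter, Finset.mem_univ, true_and] at hx hnx
    push_neg at hnx
    obtain ⟨j, hj, hxj⟩ := hnx
    by_contra hp
    have hind := indep_of_P_ne G ν x hp
    have hxi : x i = true := hx i (Finset.mem_singleton_self i)
    have hji : j ≠ i := by
      rintro rfl
      rw [hxi] at hxj
      simp at hxj
    have hxjt : x j = true := by
      have hd : (decide (j = i) : Bool) = false := by simp [hji]
      rw [hd] at hxj
      exact eq_true_of_ne_false hxj
    exact hind j i (hS (Finset.mem_coe.mpr hj) (Finset.mem_coe.mpr hi) hji) ⟨hxjt, hxi⟩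

lemma one_as_sum (i : V) : csmaOne G ν i =
    ∑ x : V → Bool, if x i = true then csmaP G ν x else 0 := by
  unfold csmaOne csmaMarg
  rw [Finset.sum_filter]
  refine Finset.sum_congr rfl fun x _ => ?_
  congr 1
  simp

lemma marg_clique_zero (hν : ∀ i, 0 < ν i) (S : Finset V) (hS : G.IsClique (S : Set V)) :
    csmaMarg G ν S (fun _ => false) = 1 - ∑ s ∈ S, csmaOne G ν s := by
  have key : csmaMarg G ν S (fun _ => false) + ∑ s ∈ S, csmaOne G ν s = 1 := by
    unfold csmaMarg
    rw [Finset.sum_filter]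
    have h2 : ∑ s ∈ S, csmaOne G ν s
        = ∑ x : V → Bool, ∑ s ∈ S, (if x s = true then csmaP G ν x else 0) := by
      rw [Finset.sum_comm]
      exact Finset.sum_congr rfl fun s _ => one_as_sum G ν s
    rw [h2, ← Finset.sum_add_distrib, ← P_sum_one G ν hν]
    refine Finset.sum_congr rfl fun x _ => ?_
    by_cases hp : csmaP G ν x = 0
    · simp [hp]
    have hind := indep_of_P_ne G ν x hp
    by_cases hall : ∀ j ∈ S, x j = false
    · rw [if_pos hall, Finset.sum_eq_zero fun s hs => if_neg (by simp [hall s hs])]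
      ring
    · push_neg at hall
      obtain ⟨s₀, hs₀, hxs₀⟩ := hall
      have hxs₀t : x s₀ = true := eq_true_of_ne_false hxs₀
      rw [if_neg (by push_neg; exact ⟨s₀, hs₀, hxs₀⟩)]
      rw [Finset.sum_eq_single s₀ (fun s hs hne => ?_) (fun h => absurd hs₀ h),
        if_pos hxs₀t, zero_add]
      rw [if_neg]
      intro hxs
      exact hind s s₀ (hS (Finset.mem_coe.mpr hs) (Finset.mem_coe.mpr hs₀) hne) ⟨hxs, hxs₀t⟩
  linarith

lemma marg_eq_of_agree (S : Finset V) (y y' : V → Bool) (h : ∀ j ∈ S, y j = y' j) :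
    csmaMarg G ν S y = csmaMarg G ν S y' := by
  unfold csmaMarg
  congr 1
  refine Finset.filter_congr fun x _ => ?_
  constructor <;> intro hx j hj
  · rw [← h j hj]; exact hx j hj
  · rw [h j hj]; exact hx j hj

lemma P_false (hν : ∀ i, 0 < ν i) : csmaP G ν (fun _ => false) = 1 / csmaZ G ν := by
  unfold csmaP
  rw [weight_false]

lemma indep_single (i : V) : IsIndep G (fun j => decide (j = i)) := by
  intro a b hab h
  simp only [decide_eq_true_eq] at h
  obtain ⟨rfl, rfl⟩ := h
  exact G.loopless.irrefl _ hab

lemma P_single (hν : ∀ i, 0 < ν i) (i : V) :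
    csmaP G ν (fun j => decide (j = i)) = ν i / csmaZ G ν := by
  unfold csmaP
  rw [weight_of_indep G ν _ (indep_single G i)]
  congr 1
  have : ∀ j : V, (if (decide (j = i) : Bool) then ν j else 1) = if j = i then ν j else 1 := by
    intro j; simp
  rw [Finset.prod_congr rfl fun j _ => this j]
  exact Fintype.prod_ite_eq' i fun j => ν j

lemma marg_pos (hν : ∀ i, 0 < ν i) (S : Finset V) (y : V → Bool) (x : V → Bool)
    (hx : ∀ j ∈ S, x j = y j) (hpx : 0 < csmaP G ν x) : 0 < csmaMarg G ν S y := by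
  unfold csmaMarg
  have hmem : x ∈ Finset.univ.filter (fun x : V → Bool => ∀ i ∈ S, x i = y i) := by
    simp only [Finset.mem_filter, Finset.mem_univ, true_and]
    exact hx
  have := Finset.single_le_sum (f := csmaP G ν) (fun z _ => P_nonneg G ν hν z) hmem
  linarith

lemma marg_false_pos (hν : ∀ i, 0 < ν i) (S : Finset V) :
    0 < csmaMarg G ν S (fun _ => false) :=
  marg_pos G ν hν S _ _ (fun j _ => rfl)
    (by rw [P_false G ν hν]; exact div_pos one_pos (Z_pos G ν hν))

lemma csmaOne_pos (hν : ∀ i, 0 < ν i) (i : V) : 0 < csmaOne G ν i := by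
  unfold csmaOne
  refine marg_pos G ν hν _ _ (fun j => decide (j = i)) (fun j hj => ?_) ?_
  · rw [Finset.mem_singleton] at hj; subst hj; simp
  · rw [P_single G ν hν i]
    exact div_pos (hν i) (Z_pos G ν hν)

lemma marg_single_pos (hν : ∀ i, 0 < ν i) (S : Finset V) (i : V) :
    0 < csmaMarg G ν S (fun j => decide (j = i)) := by
  refine marg_pos G ν hν _ _ (fun j => decide (j = i)) (fun j _ => rfl) ?_
  rw [P_single G ν hν i]
  exact div_pos (hν i) (Z_pos G ν hν)



lemma tree_count {KG : Finset (Finset V)} (T : SimpleGraph {K // K ∈ KG})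
    [DecidableRel T.Adj] (hT : T.IsTree) (i : V)
    (hconn : (T.induce {K : {K // K ∈ KG} | i ∈ K.val}).Connected) :
    (Finset.univ.filter (fun K : {K // K ∈ KG} => i ∈ K.val)).card =
      (T.edgeFinset.filter (fun e => i ∈ sep e)).card + 1 := by
  classical
  set s : Set {K // K ∈ KG} := {K : {K // K ∈ KG} | i ∈ K.val} with hs
  have hacyc : (T.induce s).IsAcyclic := by
    intro v c hc
    exact hT.IsAcyclic _
      ((SimpleGraph.Walk.map_isCycle_iff_of_injective (p := c)
        (f := (SimpleGraph.Embedding.induce (G := T) s).toHom)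
        (SimpleGraph.Embedding.induce (G := T) s).injective).mpr hc)
  have hT' : (T.induce s).IsTree := ⟨hconn, hacyc⟩
  have hcard := hT'.card_edgeFinset
  have hv : Fintype.card s =
      (Finset.univ.filter (fun K : {K // K ∈ KG} => i ∈ K.val)).card := by
    rw [Fintype.card_subtype]
    congr 1
  have he : (T.induce s).edgeFinset.card =
      (T.edgeFinset.filter (fun e => i ∈ sep e)).card := by
    apply Finset.card_nbij (fun e => e.map Subtype.val)
    · intro e he
      revert he
      induction e using Sym2.ind with
      | _ a b =>
        intro he
        simp only [Finset.mem_coe, SimpleGraph.mem_edgeFinset, SimpleGraph.mem_edgeSet] at he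
        simp only [Finset.mem_coe, Sym2.map_pair_eq, Finset.mem_filter, SimpleGraph.mem_edgeFinset,
          SimpleGraph.mem_edgeSet]
        refine ⟨he, ?_⟩
        show i ∈ (a : {K // K ∈ KG}).val ∩ (b : {K // K ∈ KG}).val
        exact Finset.mem_inter.mpr ⟨a.prop, b.prop⟩
    · intro e₁ _ e₂ _ h
      exact Sym2.map.injective Subtype.val_injective h
    · intro e he
      simp only [Finset.coe_filter, Set.mem_setOf_eq, SimpleGraph.mem_edgeFinset,
        SimpleGraph.mem_edgeSet] at he
      revert he
      induction e using Sym2.ind with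
      | _ A B =>
        intro he
        obtain ⟨hadj, hsep⟩ := he
        have hsep' : i ∈ A.val ∩ B.val := hsep
        have hA : A ∈ s := (Finset.mem_inter.mp hsep').1
        have hB : B ∈ s := (Finset.mem_inter.mp hsep').2
        refine ⟨s(⟨A, hA⟩, ⟨B, hB⟩), ?_, ?_⟩
        · simp only [Finset.mem_coe, SimpleGraph.mem_edgeFinset, SimpleGraph.mem_edgeSet]
          exact hadj
        · simp [Sym2.map_pair_eq]
  omega


end Aux
set_option maxHeartbeats 1000000 in
/-- Junction-tree expression for the back-off rates `ν i` of the CSMA product-form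
distribution on a chordal conflict graph in terms of the throughputs. -/
theorem csma_backoff_junction_tree (G : SimpleGraph V) [DecidableRel G.Adj]
    (KG : Finset (Finset V))
    (hKG : ∀ K : Finset V, K ∈ KG ↔ (G.IsClique (K : Set V) ∧
      ∀ K' : Finset V, G.IsClique (K' : Set V) → K ⊆ K' → K' = K))
    (T : SimpleGraph {K // K ∈ KG}) [DecidableRel T.Adj] (hT : T.IsTree)
    (hsub : ∀ v : V, (T.induce {K : {K // K ∈ KG} | v ∈ K.val}).Connected)
    (ν : V → ℝ) (hν : ∀ i, 0 < ν i)
    (hfact : ∀ x : V → Bool, IsIndep G x →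
      csmaP G ν x = (∏ K ∈ KG, csmaMarg G ν K x) /
        ∏ e ∈ T.edgeFinset, csmaMarg G ν (sep e) x) :
    ∀ i : V, ν i = csmaOne G ν i *
      (∏ e ∈ T.edgeFinset.filter (fun e => i ∈ sep e),
        (1 - ∑ s ∈ sep e, csmaOne G ν s)) /
      ∏ K ∈ KG.filter (fun K => i ∈ K), (1 - ∑ s ∈ K, csmaOne G ν s) := by
  intro i
  have hx0 : IsIndep G (fun _ : V => false) := by
    intro a b _ h
    simp at h
  have h1 := hfact (fun j => decide (j = i)) (indep_single G i)
  have h0 := hfact (fun _ => false) hx0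
  rw [P_single G ν hν i] at h1
  rw [P_false G ν hν] at h0
  set a := csmaOne G ν i with ha_def
  set A := ∏ K ∈ KG.filter (fun K => i ∈ K), (1 - ∑ s ∈ K, csmaOne G ν s) with hA_def
  set B := ∏ e ∈ T.edgeFinset.filter (fun e => i ∈ sep e),
      (1 - ∑ s ∈ sep e, csmaOne G ν s) with hB_def
  set C := ∏ K ∈ KG.filter (fun K => ¬ i ∈ K), csmaMarg G ν K (fun _ => false) with hC_def
  set D := ∏ e ∈ T.edgeFinset.filter (fun e => ¬ i ∈ sep e),
      csmaMarg G ν (sep e) (fun _ => false) with hD_def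
  set nE := (T.edgeFinset.filter (fun e => i ∈ sep e)).card with hnE_def
  -- cliques
  have hclique : ∀ K ∈ KG, G.IsClique (K : Set V) := fun K hK => ((hKG K).1 hK).1
  have hsepclique : ∀ e ∈ T.edgeFinset, G.IsClique ((sep e : Finset V) : Set V) := by
    intro e he
    induction e using Sym2.ind with
    | _ P Q =>
      refine (hclique P.val P.prop).subset ?_
      show ((P.val ∩ Q.val : Finset V) : Set V) ⊆ _
      exact_mod_cast Finset.coe_subset.mpr Finset.inter_subset_left
  -- agreement off i
  have hagree : ∀ S : Finset V, i ∉ S →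
      csmaMarg G ν S (fun j => decide (j = i)) = csmaMarg G ν S (fun _ => false) := by
    intro S hiS
    refine marg_eq_of_agree G ν S _ _ fun j hj => ?_
    have : j ≠ i := fun h => hiS (h ▸ hj)
    simp [this]
  -- product splittings
  have split1 : (∏ K ∈ KG, csmaMarg G ν K (fun j => decide (j = i)))
      = a ^ (KG.filter (fun K => i ∈ K)).card * C := by
    rw [← Finset.prod_filter_mul_prod_filter_not KG (fun K => i ∈ K)]
    congr 1
    · rw [Finset.prod_congr rfl (fun K hK => ?_), Finset.prod_const]
      rw [Finset.mem_filter] at hK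
      exact marg_clique_one G ν K (hclique K hK.1) i hK.2
    · exact Finset.prod_congr rfl fun K hK =>
        hagree K (Finset.mem_filter.mp hK).2
  have split0 : (∏ K ∈ KG, csmaMarg G ν K (fun _ => false)) = A * C := by
    rw [← Finset.prod_filter_mul_prod_filter_not KG (fun K => i ∈ K)]
    congr 1
    exact Finset.prod_congr rfl fun K hK =>
      marg_clique_zero G ν hν K (hclique K (Finset.mem_filter.mp hK).1)
  have splitE1 : (∏ e ∈ T.edgeFinset, csmaMarg G ν (sep e) (fun j => decide (j = i)))
      = a ^ nE * D := by
    rw [← Finset.prod_filter_mul_prod_filter_not T.edgeFinset (fun e => i ∈ sep e)]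
    congr 1
    · rw [Finset.prod_congr rfl (fun e he => ?_), Finset.prod_const, hnE_def]
      rw [Finset.mem_filter] at he
      exact marg_clique_one G ν (sep e) (hsepclique e he.1) i he.2
    · exact Finset.prod_congr rfl fun e he =>
        hagree (sep e) (Finset.mem_filter.mp he).2
  have splitE0 : (∏ e ∈ T.edgeFinset, csmaMarg G ν (sep e) (fun _ => false)) = B * D := by
    rw [← Finset.prod_filter_mul_prod_filter_not T.edgeFinset (fun e => i ∈ sep e)]
    congr 1
    exact Finset.prod_congr rfl fun e he =>
      marg_clique_zero G ν hν (sep e) (hsepclique e (Finset.mem_filter.mp he).1)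
  -- counting
  have hcount : (KG.filter (fun K => i ∈ K)).card = nE + 1 := by
    rw [hnE_def]
    rw [← tree_count T hT i (hsub i)]
    symm
    apply Finset.card_nbij (fun K : {K // K ∈ KG} => K.val)
    · intro K hK
      rw [Finset.mem_coe, Finset.mem_filter] at hK ⊢
      exact ⟨K.prop, hK.2⟩
    · intro x _ y _ h
      exact Subtype.val_injective h
    · intro K hK
      simp only [Finset.coe_filter, Set.mem_setOf_eq] at hK
      exact ⟨⟨K, hK.1⟩, by simp [hK.2], rfl⟩
  -- positivity
  have hZ := Z_pos G ν hν
  have ha : 0 < a := csmaOne_pos G ν hν i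
  have hApos : 0 < A := by
    rw [hA_def]
    refine Finset.prod_pos fun K hK => ?_
    rw [← marg_clique_zero G ν hν K (hclique K (Finset.mem_filter.mp hK).1)]
    exact marg_false_pos G ν hν K
  have hBpos : 0 < B := by
    rw [hB_def]
    refine Finset.prod_pos fun e he => ?_
    rw [← marg_clique_zero G ν hν (sep e) (hsepclique e (Finset.mem_filter.mp he).1)]
    exact marg_false_pos G ν hν (sep e)
  have hCpos : 0 < C := Finset.prod_pos fun K _ => marg_false_pos G ν hν K
  have hDpos : 0 < D := Finset.prod_pos fun e _ => marg_false_pos G ν hν (sep e)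
  rw [split1, splitE1, hcount, pow_succ] at h1
  rw [split0, splitE0] at h0
  -- h1 : ν i / Z = (a ^ nE * a * C) / (a ^ nE * D)
  -- h0 : 1 / Z = (A * C) / (B * D)
  have key : ν i = ((a ^ nE * a * C) / (a ^ nE * D)) / ((A * C) / (B * D)) := by
    rw [← h1, ← h0]
    field_simp
  rw [key]
  have hpow : (a : ℝ) ^ nE ≠ 0 := pow_ne_zero _ ha.ne'
  field_simp
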